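/- In the rack construction from a subgroup G ≤ Equiv.Perm X, orbit representatives {α_i : i ∈ I} and elements π_i ∈ G with G_{α_i} ≤ C_G(π_i): if additionally π_i fixes α_i for every i ∈ I (i.e. π_i ∈ G_{α_i}), then the resulting rack (X, ▷) is a quandle, that is, x ▷ x = x for all x ∈ X. If moreover each π_i has order dividing 2, then (X, ▷) is a kei, that is, (x ▷ y) ▷ y = x for all x, y ∈ X. -/

import Mathlib

/-- A rack: right multiplications are bijections, and self-distributivity holds. -/
def IsRack {X : Type*} (op : X → X → X) : Prop :=
  (∀ y : X, Function.Bijective fun x => op x y) ∧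
  ∀ x y z : X, op (op x y) z = op (op x z) (op y z)

/-- A quandle is an idempotent rack. -/
def IsQuandle {X : Type*} (op : X → X → X) : Prop :=
  IsRack op ∧ ∀ x : X, op x x = x

/-- A kei is a quandle whose right multiplications are involutions. -/
def IsKei {X : Type*} (op : X → X → X) : Prop :=
  IsQuandle op ∧ ∀ x y : X, op (op x y) y = x

/-- In the rack construction from `G`, orbit representatives `α i` and elements `π i`
(with `f` determined by `f(α_i · g) = g⁻¹ π_i g`, i.e. in Mathlib's left-application
convention `f (g (α i)) = g * π i * g⁻¹`, and `x ▷ y := (f y) x`): if each `π i` fixes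
`α i` then the rack is a quandle, and if moreover each `π i` has order dividing `2` then
it is a kei. -/
theorem rack_construction_quandle_kei {X : Type*} {I : Type*}
    (G : Subgroup (Equiv.Perm X))
    (α : I → X) (hα : ∀ x : X, ∃! i : I, ∃ g ∈ G, g (α i) = x)
    (π : I → Equiv.Perm X) (hπG : ∀ i : I, π i ∈ G)
    (hcent : ∀ i : I, ∀ g ∈ G, g (α i) = α i → g * π i = π i * g)
    (f : X → Equiv.Perm X) (hf : ∀ i : I, ∀ g ∈ G, f (g (α i)) = g * π i * g⁻¹)
    (hfix : ∀ i : I, π i (α i) = α i) :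
    IsQuandle (fun x y : X => f y x) ∧
    ((∀ i : I, π i ^ 2 = 1) → IsKei (fun x y : X => f y x)) := by
  have hfval : ∀ x : X, ∃ i g, g ∈ G ∧ g (α i) = x ∧ f x = g * π i * g⁻¹ := by
    intro x
    obtain ⟨i, ⟨g, hg, hgx⟩, -⟩ := hα x
    exact ⟨i, g, hg, hgx, by rw [← hgx]; exact hf i g hg⟩
  have hfG : ∀ x, f x ∈ G := by
    intro x; obtain ⟨i, g, hg, -, hfx⟩ := hfval x
    rw [hfx]; exact mul_mem (mul_mem hg (hπG i)) (inv_mem hg)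
  have hconj : ∀ x y : X, f (f y x) = f y * f x * (f y)⁻¹ := by
    intro x y
    obtain ⟨i, g, hg, hgx, hfx⟩ := hfval x
    have h1 : f y * g ∈ G := mul_mem (hfG y) hg
    have h2 : f y x = (f y * g) (α i) := by
      rw [← hgx]; rfl
    rw [h2, hf i _ h1, hfx]
    group
  have hquandle : ∀ x : X, f x x = x := by
    intro x
    obtain ⟨i, g, hg, hgx, hfx⟩ := hfval x
    rw [hfx, ← hgx]
    show g (π i (g⁻¹ (g (α i)))) = g (α i)
    rw [show ∀ (e : Equiv.Perm X) (x : X), e⁻¹ (e x) = x from fun e x => e.symm_apply_apply x, hfix i]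
  have hdist : ∀ x y z : X, f z (f y x) = f (f z y) (f z x) := by
    intro x y z
    rw [hconj y z]
    show _ = (f z) ((f y) ((f z)⁻¹ ((f z) x)))
    rw [show ∀ (e : Equiv.Perm X) (x : X), e⁻¹ (e x) = x from fun e x => e.symm_apply_apply x]
  refine ⟨⟨⟨fun y => (f y).bijective, hdist⟩, hquandle⟩, fun h2 => ?_⟩
  refine ⟨⟨⟨fun y => (f y).bijective, hdist⟩, hquandle⟩, fun x y => ?_⟩
  obtain ⟨i, g, hg, hgy, hfy⟩ := hfval y
  show f y (f y x) = x
  have hsq : f y * f y = 1 := by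
    have h := h2 i
    rw [sq] at h
    rw [hfy]
    calc g * π i * g⁻¹ * (g * π i * g⁻¹) = g * (π i * π i) * g⁻¹ := by group
      _ = 1 := by rw [h]; group
  calc f y (f y x) = (f y * f y) x := rfl
    _ = x := by rw [hsq]; rfl
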